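/- For every ρ ∈ (0, 1/2) and every positive real ξ there exists a constant D = D(ρ, ξ) such that asymptotically almost surely the random graph G(n,p) has the following property: for every vertex set W with |W| ≥ ξn, all but at most D·p^{-1} vertices v outside W satisfy deg(v, W) = (1 ± ρ)|W|p. -/

import Mathlib

open Finset

open scoped Classical

noncomputable section

namespace RandomTriangle

/-- Number of ordered adjacent pairs between `X` and `Y`. -/
def eBtw {V : Type*} (G : SimpleGraph V) (X Y : Finset V) : ℕ :=
  ((X ×ˢ Y).filter fun a => G.Adj a.1 a.2).card

/-- Edge density between `X` and `Y`. -/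
def dens {V : Type*} (G : SimpleGraph V) (X Y : Finset V) : ℝ :=
  (eBtw G X Y : ℝ) / ((X.card : ℝ) * (Y.card : ℝ))

/-- Number of neighbours of `v` in `X`. -/
def degIn {V : Type*} (G : SimpleGraph V) (v : V) (X : Finset V) : ℕ :=
  (X.filter fun w => G.Adj v w).card

/-- Neighbourhood of `v` inside `X`. -/
def nbhdIn {V : Type*} (G : SimpleGraph V) (v : V) (X : Finset V) : Finset V :=
  X.filter fun w => G.Adj v w

/-- Number of common neighbours of `u` and `w` inside `X`. -/
def codegIn {V : Type*} (G : SimpleGraph V) (u w : V) (X : Finset V) : ℕ :=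
  (X.filter fun x => G.Adj u x ∧ G.Adj w x).card

/-- `(ε, p)`-regular pair `(X, Y)`. -/
def RegularPair {V : Type*} (G : SimpleGraph V) (ε p : ℝ) (X Y : Finset V) : Prop :=
  ∀ X' ⊆ X, ∀ Y' ⊆ Y, ε * X.card ≤ (X'.card : ℝ) → ε * Y.card ≤ (Y'.card : ℝ) →
    |dens G X Y - dens G X' Y'| ≤ ε * p

/-- `(ε, p)`-regular triple. -/
def RegularTriple {V : Type*} (G : SimpleGraph V) (ε p : ℝ) (V₁ V₂ V₃ : Finset V) : Prop :=
  RegularPair G ε p V₁ V₂ ∧ RegularPair G ε p V₁ V₃ ∧ RegularPair G ε p V₂ V₃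

/-- `v ∈ V₁` is an `ε`-typical vertex of the triple `(V₁, V₂, V₃)`:
its neighbourhoods in `V₂`, `V₃` have the expected size `(1 ± ε)·d₁ᵢp|Vᵢ|`
(note `d₁ᵢ p = dens G V₁ Vᵢ`), and they contain large subsets forming an
`(ε, p)`-regular pair of density `(1 ± ε)·d₂₃p`. -/
def TypicalVertex {V : Type*} (G : SimpleGraph V) (ε p : ℝ) (V₁ V₂ V₃ : Finset V) (v : V) :
    Prop :=
  ((1 - ε) * (dens G V₁ V₂ * V₂.card) ≤ ((nbhdIn G v V₂).card : ℝ) ∧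
    ((nbhdIn G v V₂).card : ℝ) ≤ (1 + ε) * (dens G V₁ V₂ * V₂.card)) ∧
  ((1 - ε) * (dens G V₁ V₃ * V₃.card) ≤ ((nbhdIn G v V₃).card : ℝ) ∧
    ((nbhdIn G v V₃).card : ℝ) ≤ (1 + ε) * (dens G V₁ V₃ * V₃.card)) ∧
  ∃ N₂' ⊆ nbhdIn G v V₂, ∃ N₃' ⊆ nbhdIn G v V₃,
    (1 - ε) * ((nbhdIn G v V₂).card : ℝ) ≤ (N₂'.card : ℝ) ∧
    (1 - ε) * ((nbhdIn G v V₃).card : ℝ) ≤ (N₃'.card : ℝ) ∧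
    RegularPair G ε p N₂' N₃' ∧
    (1 - ε) * dens G V₂ V₃ ≤ dens G N₂' N₃' ∧
    dens G N₂' N₃' ≤ (1 + ε) * dens G V₂ V₃

/-- An `ε`-typical triple: `(ε,p)`-regular and in each part all but at most an
`ε`-fraction of the vertices are `ε`-typical. -/
def TypicalTriple {V : Type*} (G : SimpleGraph V) (ε p : ℝ) (V₁ V₂ V₃ : Finset V) : Prop :=
  RegularTriple G ε p V₁ V₂ V₃ ∧
  ((V₁.filter fun v => ¬ TypicalVertex G ε p V₁ V₂ V₃ v).card : ℝ) ≤ ε * V₁.card ∧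
  ((V₂.filter fun v => ¬ TypicalVertex G ε p V₂ V₁ V₃ v).card : ℝ) ≤ ε * V₂.card ∧
  ((V₃.filter fun v => ¬ TypicalVertex G ε p V₃ V₁ V₂ v).card : ℝ) ≤ ε * V₃.card

/-- A `(δ, ε, p)`-super-regular triple. -/
def SuperRegularTriple {V : Type*} (G : SimpleGraph V) (δ ε p : ℝ) (V₁ V₂ V₃ : Finset V) :
    Prop :=
  RegularTriple G ε p V₁ V₂ V₃ ∧
  δ * p ≤ dens G V₁ V₂ ∧ δ * p ≤ dens G V₁ V₃ ∧ δ * p ≤ dens G V₂ V₃ ∧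
  (∀ v ∈ V₁, TypicalVertex G ε p V₁ V₂ V₃ v) ∧
  (∀ v ∈ V₂, TypicalVertex G ε p V₂ V₁ V₃ v) ∧
  (∀ v ∈ V₃, TypicalVertex G ε p V₃ V₁ V₂ v)

/-- An edge `(u, w)` with `u ∈ V₂`, `w ∈ V₃` is `ε`-good (w.r.t. `V₁`) if its endpoints
have at least `(1 - ε)·d₁₂d₁₃p²|V₁|` common neighbours in `V₁`
(note `d₁₂d₁₃p² = dens G V₁ V₂ * dens G V₁ V₃`). -/
def GoodEdge {V : Type*} (G : SimpleGraph V) (ε : ℝ) (V₁ V₂ V₃ : Finset V) (u w : V) : Prop :=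
  (1 - ε) * (dens G V₁ V₂ * dens G V₁ V₃ * V₁.card) ≤ (codegIn G u w V₁ : ℝ)

/-- An `ε`-typical vertex `v ∈ V₁` is `ε`-good if the pair of its neighbourhoods in
`V₂`, `V₃` spans at most `ε·d₁₂d₁₃d₂₃p³|V₂||V₃|` edges that are not `ε`-good. -/
def GoodVertex {V : Type*} (G : SimpleGraph V) (ε p : ℝ) (V₁ V₂ V₃ : Finset V) (v : V) :
    Prop :=
  TypicalVertex G ε p V₁ V₂ V₃ v ∧
  ((((nbhdIn G v V₂) ×ˢ (nbhdIn G v V₃)).filter fun uw =>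
      G.Adj uw.1 uw.2 ∧ ¬ GoodEdge G ε V₁ V₂ V₃ uw.1 uw.2).card : ℝ) ≤
    ε * (dens G V₁ V₂ * dens G V₁ V₃ * dens G V₂ V₃ * V₂.card * V₃.card)

/-- A `(δ, ε, p)`-strong-super-regular triple. -/
def StrongSuperRegularTriple {V : Type*} (G : SimpleGraph V) (δ ε p : ℝ)
    (V₁ V₂ V₃ : Finset V) : Prop :=
  SuperRegularTriple G δ ε p V₁ V₂ V₃ ∧
  (∀ v ∈ V₁, GoodVertex G ε p V₁ V₂ V₃ v) ∧
  (∀ v ∈ V₂, GoodVertex G ε p V₂ V₁ V₃ v) ∧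
  (∀ v ∈ V₃, GoodVertex G ε p V₃ V₁ V₂ v)

/-- A triangle packing: a collection of pairwise vertex-disjoint triangles of `G`. -/
def IsTrianglePacking {V : Type*} [DecidableEq V] (G : SimpleGraph V)
    (T : Finset (Finset V)) : Prop :=
  (∀ t ∈ T, t.card = 3 ∧ ∀ x ∈ t, ∀ y ∈ t, x ≠ y → G.Adj x y) ∧
  (∀ s ∈ T, ∀ t ∈ T, s ≠ t → Disjoint s t)

def idx0 {k : ℕ} (t : Fin k) : Fin (3 * k) := ⟨3 * t.1, by have := t.2; omega⟩
def idx1 {k : ℕ} (t : Fin k) : Fin (3 * k) := ⟨3 * t.1 + 1, by have := t.2; omega⟩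
def idx2 {k : ℕ} (t : Fin k) : Fin (3 * k) := ⟨3 * t.1 + 2, by have := t.2; omega⟩

/-- The endpoints of every edge between `A` and `B` have at most `4|C|p²` common
neighbours in `C`. -/
def CodegBound {V : Type*} (G : SimpleGraph V) (p : ℝ) (A B C : Finset V) : Prop :=
  ∀ u ∈ A, ∀ w ∈ B, G.Adj u w → (codegIn G u w C : ℝ) ≤ 4 * C.card * p ^ 2

/-- The probability, in the Erdős–Rényi random graph `G(n, p)`, of the event `A`. -/
def gnpProb (n : ℕ) (p : ℝ) (A : Set (SimpleGraph (Fin n))) : ℝ :=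
  ∑ G ∈ Finset.univ.filter (fun G => G ∈ A),
    p ^ ((Finset.univ.filter fun e : Sym2 (Fin n) => e ∈ G.edgeSet).card) *
      (1 - p) ^ (n.choose 2 - (Finset.univ.filter fun e : Sym2 (Fin n) => e ∈ G.edgeSet).card)

/-- A sequence of graph properties holds asymptotically almost surely in `G(n, p n)`. -/
def AAS (p : ℕ → ℝ) (P : ∀ n : ℕ, SimpleGraph (Fin n) → Prop) : Prop :=
  Filter.Tendsto (fun n => gnpProb n (p n) {G | P n G}) Filter.atTop (nhds 1)

end RandomTriangle

open RandomTriangle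

set_option maxHeartbeats 1000000

namespace StmtAux

def allE (n : ℕ) : Finset (Sym2 (Fin n)) := univ.filter fun e => ¬ e.IsDiag

lemma card_allE (n : ℕ) : (allE n).card = n.choose 2 := by
  have h : allE n = (⊤ : SimpleGraph (Fin n)).edgeFinset := by
    ext e
    induction e with
    | h x y => simp [allE, SimpleGraph.mem_edgeFinset, SimpleGraph.edgeSet_top]
  rw [h, SimpleGraph.card_edgeFinset_top_eq_card_choose_two, Fintype.card_fin]

def wt (n : ℕ) (q : ℝ) (S : Finset (Sym2 (Fin n))) : ℝ :=
  q ^ S.card * (1 - q) ^ (n.choose 2 - S.card)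

lemma edgeFinset_eq_filter {n : ℕ} (G : SimpleGraph (Fin n)) :
    (univ.filter fun e : Sym2 (Fin n) => e ∈ G.edgeSet) = G.edgeFinset := by
  ext e; simp [SimpleGraph.mem_edgeFinset]

lemma edgeFinset_subset_allE {n : ℕ} (G : SimpleGraph (Fin n)) : G.edgeFinset ⊆ allE n := by
  intro e he
  rw [SimpleGraph.mem_edgeFinset] at he
  simp [allE, SimpleGraph.not_isDiag_of_mem_edgeSet G he]


lemma edgeFinset_fromEdgeSet {n : ℕ} (S : Finset (Sym2 (Fin n))) (hS : S ⊆ allE n) :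
    (SimpleGraph.fromEdgeSet (↑S)).edgeFinset = S := by
  have h1 : (SimpleGraph.fromEdgeSet (↑S : Set (Sym2 (Fin n)))).edgeSet = ↑S := by
    rw [SimpleGraph.edgeSet_fromEdgeSet]
    ext e
    constructor
    · rintro ⟨heS, _⟩; exact heS
    · intro heS
      refine ⟨heS, ?_⟩
      have := hS heS
      simp only [allE, mem_filter] at this
      exact this.2
  apply Finset.coe_injective
  rw [SimpleGraph.coe_edgeFinset, h1]

lemma gnpProb_eq {n : ℕ} {q : ℝ} (A : Set (SimpleGraph (Fin n))) :
    RandomTriangle.gnpProb n q A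
      = ∑ S ∈ (allE n).powerset.filter
          (fun S : Finset (Sym2 (Fin n)) => SimpleGraph.fromEdgeSet ↑S ∈ A), wt n q S := by
  unfold RandomTriangle.gnpProb
  refine Finset.sum_nbij' (fun G => G.edgeFinset)
    (fun S : Finset (Sym2 (Fin n)) => SimpleGraph.fromEdgeSet ↑S) ?_ ?_ ?_ ?_ ?_
  · intro G hG
    simp only [mem_filter, mem_powerset] at *
    refine ⟨edgeFinset_subset_allE G, ?_⟩
    rw [SimpleGraph.coe_edgeFinset, SimpleGraph.fromEdgeSet_edgeSet]; exact hG.2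
  · intro S hS
    simp only [mem_filter, mem_powerset] at *
    exact ⟨mem_univ _, hS.2⟩
  · intro G hG
    rw [SimpleGraph.coe_edgeFinset, SimpleGraph.fromEdgeSet_edgeSet]
  · intro S hS
    simp only [mem_filter, mem_powerset] at hS
    apply Finset.coe_injective
    simp only [SimpleGraph.coe_edgeFinset, SimpleGraph.edgeSet_fromEdgeSet]
    ext e
    constructor
    · rintro ⟨heS, _⟩; exact heS
    · intro heS
      refine ⟨heS, ?_⟩
      have := hS.1 heS
      simp only [allE, mem_filter] at this
      exact this.2
  · intro G hG
    rw [edgeFinset_eq_filter]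
    rfl

lemma sum_wt_one {α : Type*} (E : Finset α) (q : ℝ) :
    ∑ S ∈ E.powerset, q ^ S.card * (1 - q) ^ (E.card - S.card) = 1 := by
  rw [Finset.sum_pow_mul_eq_add_pow]
  simp

lemma split_sum {α : Type*} [DecidableEq α] (E F : Finset α) (hEF : E ⊆ F) (f : ℕ → ℝ) (q : ℝ) :
    ∑ S ∈ F.powerset, f (S ∩ E).card * (q ^ S.card * (1 - q) ^ (F.card - S.card))
      = ∑ k ∈ Finset.range (E.card + 1),
          (E.card.choose k : ℝ) * (f k * (q ^ k * (1 - q) ^ (E.card - k))) := by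
  have hM : (F \ E).card + E.card = F.card := Finset.card_sdiff_add_card_eq_card hEF
  have key : ∑ S ∈ F.powerset, f (S ∩ E).card * (q ^ S.card * (1 - q) ^ (F.card - S.card))
      = ∑ AB ∈ E.powerset ×ˢ (F \ E).powerset,
          (f AB.1.card * (q ^ AB.1.card * (1 - q) ^ (E.card - AB.1.card)))
            * (q ^ AB.2.card * (1 - q) ^ ((F \ E).card - AB.2.card)) := by
    refine Finset.sum_nbij' (fun S => (S ∩ E, S \ E)) (fun AB => AB.1 ∪ AB.2) ?_ ?_ ?_ ?_ ?_
    · intro S hS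
      simp only [mem_powerset, mem_product] at *
      exact ⟨Finset.inter_subset_right, fun a ha => by
        simp only [mem_sdiff] at *; exact ⟨hS ha.1, ha.2⟩⟩
    · intro AB hAB
      simp only [mem_powerset, mem_product] at *
      exact Finset.union_subset (hAB.1.trans hEF) (hAB.2.trans (Finset.sdiff_subset))
    · intro S hS
      simp only []
      ext a
      simp only [Finset.mem_union, Finset.mem_inter, Finset.mem_sdiff]
      tauto
    · intro AB hAB
      simp only [mem_powerset, mem_product] at hAB
      have h1 : (AB.1 ∪ AB.2) ∩ E = AB.1 := by
        ext a
        simp only [Finset.mem_inter, Finset.mem_union]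
        constructor
        · rintro ⟨h | h, hE⟩
          · exact h
          · exact absurd hE (Finset.mem_sdiff.1 (hAB.2 h)).2
        · intro h; exact ⟨Or.inl h, hAB.1 h⟩
      have h2 : (AB.1 ∪ AB.2) \ E = AB.2 := by
        ext a
        simp only [Finset.mem_sdiff, Finset.mem_union]
        constructor
        · rintro ⟨h | h, hE⟩
          · exact absurd (hAB.1 h) hE
          · exact h
        · intro h; exact ⟨Or.inr h, (Finset.mem_sdiff.1 (hAB.2 h)).2⟩
      simp [h1, h2]
    · intro S hS
      simp only [mem_powerset] at hS
      have hA : (S ∩ E).card ≤ E.card := Finset.card_le_card Finset.inter_subset_right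
      have hB : (S \ E).card ≤ (F \ E).card := Finset.card_le_card (fun a ha => by
        simp only [mem_sdiff] at *; exact ⟨hS ha.1, ha.2⟩)
      have hcard : (S ∩ E).card + (S \ E).card = S.card :=
        Finset.card_inter_add_card_sdiff S E
      have hsub : F.card - S.card = (E.card - (S ∩ E).card) + ((F \ E).card - (S \ E).card) := by
        omega
      rw [hsub, ← hcard, pow_add, pow_add]
      ring
  rw [key, Finset.sum_product]
  have inner : ∀ A ∈ E.powerset,
      ∑ B ∈ (F \ E).powerset,
          (f A.card * (q ^ A.card * (1 - q) ^ (E.card - A.card)))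
            * (q ^ B.card * (1 - q) ^ ((F \ E).card - B.card))
        = f A.card * (q ^ A.card * (1 - q) ^ (E.card - A.card)) := by
    intro A _
    rw [← Finset.mul_sum, sum_wt_one, mul_one]
  rw [Finset.sum_congr rfl inner]
  rw [Finset.sum_powerset_apply_card (fun k => f k * (q ^ k * (1 - q) ^ (E.card - k)))]
  refine Finset.sum_congr rfl fun k _ => ?_
  rw [nsmul_eq_mul]

lemma exp_le_one_add_add_sq {x : ℝ} (hx : |x| ≤ 1) :
    Real.exp x ≤ 1 + x + (3/4) * x^2 := by
  have h := Real.exp_bound hx (n := 3) (by norm_num)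
  have hsum : ∑ m ∈ Finset.range 3, x ^ m / m.factorial = 1 + x + x^2/2 := by
    rw [Finset.sum_range_succ, Finset.sum_range_succ, Finset.sum_range_one]
    norm_num [Nat.factorial]
  rw [hsum] at h
  have h1 : Real.exp x - (1 + x + x^2/2) ≤ |x|^3 * (Nat.succ 3 / (Nat.factorial 3 * 3)) :=
    (abs_sub_le_iff.1 h).1
  have h2 : (Nat.succ 3 : ℝ) / (Nat.factorial 3 * 3) = 2/9 := by
    norm_num [Nat.factorial]
  rw [h2] at h1
  have h3 : |x|^3 ≤ x^2 := by
    have : |x|^3 ≤ |x|^2 := pow_le_pow_of_le_one (abs_nonneg x) hx (by norm_num)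
    calc |x|^3 ≤ |x|^2 := this
      _ = x^2 := sq_abs x
  nlinarith [sq_nonneg x]

lemma chernoff_high (m : ℕ) (q ρ : ℝ) (hq0 : 0 ≤ q) (hq1 : q ≤ 1) (hρ0 : 0 < ρ) (hρ1 : ρ ≤ 1) :
    ∑ k ∈ (Finset.range (m+1)).filter (fun k : ℕ => (1+ρ) * (m * q) ≤ (k:ℝ)),
      (m.choose k : ℝ) * (q ^ k * (1-q) ^ (m-k)) ≤ Real.exp (-(ρ^2/4) * (m*q)) := by
  set l : ℝ := ρ/2 with hl
  have hl0 : 0 < l := by positivity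
  have hl1 : l ≤ 1 := by rw [hl]; linarith
  have hterm : ∀ k : ℕ, (0:ℝ) ≤ (m.choose k : ℝ) * (q ^ k * (1-q) ^ (m-k)) := by
    intro k
    exact mul_nonneg (Nat.cast_nonneg _)
      (mul_nonneg (pow_nonneg hq0 _) (pow_nonneg (by linarith) _))
  set t : ℝ := (1+ρ) * (m * q) with ht
  have step1 : ∑ k ∈ (Finset.range (m+1)).filter (fun k : ℕ => t ≤ (k:ℝ)),
      (m.choose k : ℝ) * (q ^ k * (1-q) ^ (m-k))
      ≤ ∑ k ∈ Finset.range (m+1),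
        Real.exp (l * ((k:ℝ) - t)) * ((m.choose k : ℝ) * (q ^ k * (1-q) ^ (m-k))) := by
    refine le_trans (Finset.sum_le_sum ?_) (Finset.sum_le_sum_of_subset_of_nonneg
      (Finset.filter_subset _ _) ?_)
    · intro k hk
      rw [Finset.mem_filter] at hk
      have : (1:ℝ) ≤ Real.exp (l * ((k:ℝ) - t)) := by
        rw [← Real.exp_zero]
        apply Real.exp_le_exp.2
        have := hk.2
        nlinarith
      nlinarith [hterm k, this]
    · intro k _ _
      exact mul_nonneg (Real.exp_pos _).le (hterm k)
  have step2 : ∑ k ∈ Finset.range (m+1),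
      Real.exp (l * ((k:ℝ) - t)) * ((m.choose k : ℝ) * (q ^ k * (1-q) ^ (m-k)))
      = Real.exp (-(l*t)) * ((q * Real.exp l + (1-q)) ^ m) := by
    rw [add_pow, Finset.mul_sum]
    refine Finset.sum_congr rfl fun k hk => ?_
    have hek : Real.exp (l * (k:ℝ)) = (Real.exp l) ^ k := by
      rw [← Real.exp_nat_mul]; ring_nf
    have : Real.exp (l * ((k:ℝ) - t)) = Real.exp (-(l*t)) * (Real.exp l)^k := by
      rw [← hek, ← Real.exp_add]; ring_nf
    rw [this, mul_pow]
    ring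
  have hq' : 0 ≤ 1 + q * (Real.exp l - 1) := by
    have : (1:ℝ) ≤ Real.exp l := by
      rw [← Real.exp_zero]; exact Real.exp_le_exp.2 hl0.le
    nlinarith
  have step3 : (q * Real.exp l + (1-q)) ^ m ≤ Real.exp ((m:ℝ) * (q * (Real.exp l - 1))) := by
    have h1 : q * Real.exp l + (1-q) = 1 + q * (Real.exp l - 1) := by ring
    have h2 : 1 + q * (Real.exp l - 1) ≤ Real.exp (q * (Real.exp l - 1)) := by
      have := Real.add_one_le_exp (q * (Real.exp l - 1)); linarith
    calc (q * Real.exp l + (1-q)) ^ m = (1 + q * (Real.exp l - 1)) ^ m := by rw [h1]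
      _ ≤ (Real.exp (q * (Real.exp l - 1))) ^ m := pow_le_pow_left₀ hq' h2 m
      _ = Real.exp ((m:ℝ) * (q * (Real.exp l - 1))) := by
          rw [← Real.exp_nat_mul]
  have hexpl : Real.exp l ≤ 1 + l + (3/4) * l^2 :=
    exp_le_one_add_add_sq (by rw [abs_of_nonneg hl0.le]; exact hl1)
  have hfinal : Real.exp (-(l*t)) * Real.exp ((m:ℝ) * (q * (Real.exp l - 1)))
      ≤ Real.exp (-(ρ^2/4) * (m*q)) := by
    rw [← Real.exp_add]
    apply Real.exp_le_exp.2
    have hmq : (0:ℝ) ≤ (m:ℝ) * q := by positivity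
    have : (m:ℝ) * (q * (Real.exp l - 1)) ≤ (m:ℝ) * q * (l + (3/4) * l^2) := by
      have h := hexpl
      nlinarith
    rw [ht, hl] at *
    nlinarith
  calc ∑ k ∈ (Finset.range (m+1)).filter (fun k : ℕ => (1+ρ) * (m * q) ≤ (k:ℝ)),
      (m.choose k : ℝ) * (q ^ k * (1-q) ^ (m-k))
      ≤ Real.exp (-(l*t)) * ((q * Real.exp l + (1-q)) ^ m) := step1.trans_eq step2
    _ ≤ Real.exp (-(l*t)) * Real.exp ((m:ℝ) * (q * (Real.exp l - 1))) := by
        apply mul_le_mul_of_nonneg_left step3 (Real.exp_pos _).le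
    _ ≤ Real.exp (-(ρ^2/4) * (m*q)) := hfinal

lemma chernoff_low (m : ℕ) (q ρ : ℝ) (hq0 : 0 ≤ q) (hq1 : q ≤ 1) (hρ0 : 0 < ρ) (hρ1 : ρ ≤ 1) :
    ∑ k ∈ (Finset.range (m+1)).filter (fun k : ℕ => (k:ℝ) ≤ (1-ρ) * (m * q)),
      (m.choose k : ℝ) * (q ^ k * (1-q) ^ (m-k)) ≤ Real.exp (-(ρ^2/4) * (m*q)) := by
  set l : ℝ := ρ/2 with hl
  have hl0 : 0 < l := by positivity
  have hl1 : l ≤ 1 := by rw [hl]; linarith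
  have hterm : ∀ k : ℕ, (0:ℝ) ≤ (m.choose k : ℝ) * (q ^ k * (1-q) ^ (m-k)) := by
    intro k
    exact mul_nonneg (Nat.cast_nonneg _)
      (mul_nonneg (pow_nonneg hq0 _) (pow_nonneg (by linarith) _))
  set t : ℝ := (1-ρ) * (m * q) with ht
  have step1 : ∑ k ∈ (Finset.range (m+1)).filter (fun k : ℕ => (k:ℝ) ≤ t),
      (m.choose k : ℝ) * (q ^ k * (1-q) ^ (m-k))
      ≤ ∑ k ∈ Finset.range (m+1),
        Real.exp (l * (t - (k:ℝ))) * ((m.choose k : ℝ) * (q ^ k * (1-q) ^ (m-k))) := by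
    refine le_trans (Finset.sum_le_sum ?_) (Finset.sum_le_sum_of_subset_of_nonneg
      (Finset.filter_subset _ _) ?_)
    · intro k hk
      rw [Finset.mem_filter] at hk
      have : (1:ℝ) ≤ Real.exp (l * (t - (k:ℝ))) := by
        rw [← Real.exp_zero]
        apply Real.exp_le_exp.2
        have := hk.2
        nlinarith
      nlinarith [hterm k, this]
    · intro k _ _
      exact mul_nonneg (Real.exp_pos _).le (hterm k)
  have step2 : ∑ k ∈ Finset.range (m+1),
      Real.exp (l * (t - (k:ℝ))) * ((m.choose k : ℝ) * (q ^ k * (1-q) ^ (m-k)))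
      = Real.exp (l*t) * ((q * Real.exp (-l) + (1-q)) ^ m) := by
    rw [add_pow, Finset.mul_sum]
    refine Finset.sum_congr rfl fun k hk => ?_
    have hek : Real.exp ((-l) * (k:ℝ)) = (Real.exp (-l)) ^ k := by
      rw [← Real.exp_nat_mul]; ring_nf
    have : Real.exp (l * (t - (k:ℝ))) = Real.exp (l*t) * (Real.exp (-l))^k := by
      rw [← hek, ← Real.exp_add]; ring_nf
    rw [this, mul_pow]
    ring
  have hq' : 0 ≤ 1 + q * (Real.exp (-l) - 1) := by
    nlinarith [(Real.exp_pos (-l)).le]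
  have step3 : (q * Real.exp (-l) + (1-q)) ^ m ≤ Real.exp ((m:ℝ) * (q * (Real.exp (-l) - 1))) := by
    have h1 : q * Real.exp (-l) + (1-q) = 1 + q * (Real.exp (-l) - 1) := by ring
    have h2 : 1 + q * (Real.exp (-l) - 1) ≤ Real.exp (q * (Real.exp (-l) - 1)) := by
      have := Real.add_one_le_exp (q * (Real.exp (-l) - 1)); linarith
    calc (q * Real.exp (-l) + (1-q)) ^ m = (1 + q * (Real.exp (-l) - 1)) ^ m := by rw [h1]
      _ ≤ (Real.exp (q * (Real.exp (-l) - 1))) ^ m := pow_le_pow_left₀ hq' h2 m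
      _ = Real.exp ((m:ℝ) * (q * (Real.exp (-l) - 1))) := by
          rw [← Real.exp_nat_mul]
  have hexpl : Real.exp (-l) ≤ 1 - l + (3/4) * l^2 := by
    have := exp_le_one_add_add_sq (x := -l) (by rw [abs_of_nonpos (by linarith)]; linarith)
    calc Real.exp (-l) ≤ 1 + (-l) + (3/4) * (-l)^2 := this
      _ = 1 - l + (3/4) * l^2 := by ring
  have hfinal : Real.exp (l*t) * Real.exp ((m:ℝ) * (q * (Real.exp (-l) - 1)))
      ≤ Real.exp (-(ρ^2/4) * (m*q)) := by
    rw [← Real.exp_add]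
    apply Real.exp_le_exp.2
    have hmq : (0:ℝ) ≤ (m:ℝ) * q := by positivity
    have : (m:ℝ) * (q * (Real.exp (-l) - 1)) ≤ (m:ℝ) * q * (-l + (3/4) * l^2) := by
      nlinarith
    rw [ht, hl] at *
    nlinarith
  calc ∑ k ∈ (Finset.range (m+1)).filter (fun k : ℕ => (k:ℝ) ≤ (1-ρ) * (m * q)),
      (m.choose k : ℝ) * (q ^ k * (1-q) ^ (m-k))
      ≤ Real.exp (l*t) * ((q * Real.exp (-l) + (1-q)) ^ m) := step1.trans_eq step2
    _ ≤ Real.exp (l*t) * Real.exp ((m:ℝ) * (q * (Real.exp (-l) - 1))) := by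
        apply mul_le_mul_of_nonneg_left step3 (Real.exp_pos _).le
    _ ≤ Real.exp (-(ρ^2/4) * (m*q)) := hfinal

def btwE {n : ℕ} (U W : Finset (Fin n)) : Finset (Sym2 (Fin n)) :=
  (U ×ˢ W).image (fun a => s(a.1, a.2))

lemma injOn_mk {n : ℕ} {U W : Finset (Fin n)} (hUW : Disjoint U W) :
    Set.InjOn (fun a : Fin n × Fin n => s(a.1, a.2)) ↑(U ×ˢ W) := by
  rintro ⟨a1, a2⟩ ha ⟨b1, b2⟩ hb hab
  simp only [Finset.coe_product, Set.mem_prod, Finset.mem_coe] at ha hb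
  simp only [Sym2.eq_iff] at hab
  rcases hab with ⟨h1, h2⟩ | ⟨h1, h2⟩
  · simp [h1, h2]
  · exfalso
    exact Finset.disjoint_left.1 hUW ha.1 (h1 ▸ hb.2)

lemma btwE_subset_allE {n : ℕ} {U W : Finset (Fin n)} (hUW : Disjoint U W) :
    btwE U W ⊆ allE n := by
  intro e he
  simp only [btwE, Finset.mem_image, Finset.mem_product] at he
  obtain ⟨⟨a1, a2⟩, ⟨h1, h2⟩, rfl⟩ := he
  simp only [allE, mem_filter, mem_univ, true_and, Sym2.isDiag_iff_proj_eq]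
  intro h
  exact Finset.disjoint_left.1 hUW h1 (h ▸ h2)

lemma card_btwE {n : ℕ} {U W : Finset (Fin n)} (hUW : Disjoint U W) :
    (btwE U W).card = U.card * W.card := by
  rw [btwE, Finset.card_image_of_injOn (injOn_mk hUW), Finset.card_product]

lemma sum_degIn_fromEdgeSet {n : ℕ} {U W : Finset (Fin n)} (hUW : Disjoint U W)
    (S : Finset (Sym2 (Fin n))) :
    ∑ v ∈ U, RandomTriangle.degIn (SimpleGraph.fromEdgeSet (↑S : Set (Sym2 (Fin n)))) v W
      = (S ∩ btwE U W).card := by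
  have himg : S ∩ btwE U W
      = ((U ×ˢ W).filter fun a => s(a.1, a.2) ∈ S).image (fun a => s(a.1, a.2)) := by
    ext e
    simp only [Finset.mem_inter, btwE, Finset.mem_image, Finset.mem_filter]
    constructor
    · rintro ⟨heS, ⟨a, ha, rfl⟩⟩
      exact ⟨a, ⟨ha, heS⟩, rfl⟩
    · rintro ⟨a, ⟨ha, haS⟩, rfl⟩
      exact ⟨haS, ⟨a, ha, rfl⟩⟩
  rw [himg, Finset.card_image_of_injOn
    ((injOn_mk hUW).mono (by exact_mod_cast Finset.filter_subset _ _))]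
  rw [Finset.card_filter, Finset.sum_product]
  refine Finset.sum_congr rfl fun v hv => ?_
  rw [RandomTriangle.degIn, Finset.card_filter]
  refine Finset.sum_congr rfl fun w hw => ?_
  congr 1
  simp only [SimpleGraph.fromEdgeSet_adj, Finset.mem_coe, eq_iff_iff]
  constructor
  · exact And.left
  · intro h; exact ⟨h, fun hvw => Finset.disjoint_left.1 hUW hv (hvw ▸ hw)⟩

lemma prob_high {n : ℕ} {q ρ : ℝ} (hq0 : 0 ≤ q) (hq1 : q ≤ 1) (hρ0 : 0 < ρ) (hρ1 : ρ ≤ 1)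
    (U W : Finset (Fin n)) (hUW : Disjoint U W) :
    RandomTriangle.gnpProb n q {G | (1+ρ) * (((U.card * W.card : ℕ) : ℝ) * q)
        ≤ ((∑ v ∈ U, RandomTriangle.degIn G v W : ℕ) : ℝ)}
      ≤ Real.exp (-(ρ^2/4) * (((U.card * W.card : ℕ) : ℝ) * q)) := by
  set E₀ := btwE U W with hE₀
  have hsub : E₀ ⊆ allE n := btwE_subset_allE hUW
  have hcard : E₀.card = U.card * W.card := card_btwE hUW
  rw [gnpProb_eq]
  have hfc : (allE n).powerset.filter
      (fun S : Finset (Sym2 (Fin n)) => SimpleGraph.fromEdgeSet ↑S ∈ {G | (1+ρ) * (((U.card * W.card : ℕ) : ℝ) * q)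
        ≤ ((∑ v ∈ U, RandomTriangle.degIn G v W : ℕ) : ℝ)})
      = (allE n).powerset.filter
      (fun S : Finset (Sym2 (Fin n)) => (1+ρ) * (((U.card * W.card : ℕ) : ℝ) * q)
        ≤ (((S ∩ E₀).card : ℕ) : ℝ)) := by
    refine Finset.filter_congr fun S hS => ?_
    simp only [Set.mem_setOf_eq, sum_degIn_fromEdgeSet hUW S, hE₀]
  rw [hfc]
  have key : ∑ S ∈ (allE n).powerset.filter
      (fun S : Finset (Sym2 (Fin n)) => (1+ρ) * (((U.card * W.card : ℕ) : ℝ) * q)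
        ≤ (((S ∩ E₀).card : ℕ) : ℝ)), wt n q S
      = ∑ k ∈ Finset.range (E₀.card + 1),
          (E₀.card.choose k : ℝ) *
            ((if (1+ρ) * (((U.card * W.card : ℕ) : ℝ) * q) ≤ ((k:ℕ):ℝ) then (1:ℝ) else 0)
              * (q ^ k * (1 - q) ^ (E₀.card - k))) := by
    rw [Finset.sum_filter]
    rw [← split_sum E₀ (allE n) hsub
      (fun k => if (1+ρ) * (((U.card * W.card : ℕ) : ℝ) * q) ≤ ((k:ℕ):ℝ) then (1:ℝ) else 0) q]
    refine Finset.sum_congr rfl fun S hS => ?_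
    rw [wt, card_allE]
    by_cases h : (1+ρ) * (((U.card * W.card : ℕ) : ℝ) * q) ≤ (((S ∩ E₀).card : ℕ) : ℝ) <;>
      simp [h]
  rw [key]
  have := chernoff_high E₀.card q ρ hq0 hq1 hρ0 hρ1
  rw [hcard] at this
  calc ∑ k ∈ Finset.range (E₀.card + 1),
          (E₀.card.choose k : ℝ) *
            ((if (1+ρ) * (((U.card * W.card : ℕ) : ℝ) * q) ≤ ((k:ℕ):ℝ) then (1:ℝ) else 0)
              * (q ^ k * (1 - q) ^ (E₀.card - k)))
      = ∑ k ∈ (Finset.range (E₀.card+1)).filter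
          (fun k : ℕ => (1+ρ) * (((U.card * W.card : ℕ):ℝ) * q) ≤ (k:ℝ)),
          (E₀.card.choose k : ℝ) * (q ^ k * (1-q) ^ (E₀.card-k)) := by
        rw [Finset.sum_filter]
        refine Finset.sum_congr rfl fun k _ => ?_
        by_cases h : (1+ρ) * (((U.card * W.card : ℕ):ℝ) * q) ≤ (k:ℝ) <;> simp [h]
    _ ≤ Real.exp (-(ρ^2/4) * (((U.card * W.card : ℕ) : ℝ) * q)) := by
        have h2 := chernoff_high E₀.card q ρ hq0 hq1 hρ0 hρ1
        have hm : ((E₀.card : ℝ)) = ((U.card * W.card : ℕ) : ℝ) := by rw [hcard]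
        rw [hm] at h2
        convert h2 using 3

lemma prob_low {n : ℕ} {q ρ : ℝ} (hq0 : 0 ≤ q) (hq1 : q ≤ 1) (hρ0 : 0 < ρ) (hρ1 : ρ ≤ 1)
    (U W : Finset (Fin n)) (hUW : Disjoint U W) :
    RandomTriangle.gnpProb n q {G | ((∑ v ∈ U, RandomTriangle.degIn G v W : ℕ) : ℝ)
        ≤ (1-ρ) * (((U.card * W.card : ℕ) : ℝ) * q)}
      ≤ Real.exp (-(ρ^2/4) * (((U.card * W.card : ℕ) : ℝ) * q)) := by
  set E₀ := btwE U W with hE₀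
  have hsub : E₀ ⊆ allE n := btwE_subset_allE hUW
  have hcard : E₀.card = U.card * W.card := card_btwE hUW
  rw [gnpProb_eq]
  have hfc : (allE n).powerset.filter
      (fun S : Finset (Sym2 (Fin n)) => SimpleGraph.fromEdgeSet ↑S ∈ {G | ((∑ v ∈ U, RandomTriangle.degIn G v W : ℕ) : ℝ)
        ≤ (1-ρ) * (((U.card * W.card : ℕ) : ℝ) * q)})
      = (allE n).powerset.filter
      (fun S : Finset (Sym2 (Fin n)) => (((S ∩ E₀).card : ℕ) : ℝ)
        ≤ (1-ρ) * (((U.card * W.card : ℕ) : ℝ) * q)) := by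
    refine Finset.filter_congr fun S hS => ?_
    simp only [Set.mem_setOf_eq, sum_degIn_fromEdgeSet hUW S, hE₀]
  rw [hfc]
  have key : ∑ S ∈ (allE n).powerset.filter
      (fun S : Finset (Sym2 (Fin n)) => (((S ∩ E₀).card : ℕ) : ℝ)
        ≤ (1-ρ) * (((U.card * W.card : ℕ) : ℝ) * q)), wt n q S
      = ∑ k ∈ Finset.range (E₀.card + 1),
          (E₀.card.choose k : ℝ) *
            ((if ((k:ℕ):ℝ) ≤ (1-ρ) * (((U.card * W.card : ℕ) : ℝ) * q) then (1:ℝ) else 0)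
              * (q ^ k * (1 - q) ^ (E₀.card - k))) := by
    rw [Finset.sum_filter]
    rw [← split_sum E₀ (allE n) hsub
      (fun k => if ((k:ℕ):ℝ) ≤ (1-ρ) * (((U.card * W.card : ℕ) : ℝ) * q) then (1:ℝ) else 0) q]
    refine Finset.sum_congr rfl fun S hS => ?_
    rw [wt, card_allE]
    by_cases h : (((S ∩ E₀).card : ℕ) : ℝ) ≤ (1-ρ) * (((U.card * W.card : ℕ) : ℝ) * q) <;>
      simp [h]
  rw [key]
  calc ∑ k ∈ Finset.range (E₀.card + 1),
          (E₀.card.choose k : ℝ) *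
            ((if ((k:ℕ):ℝ) ≤ (1-ρ) * (((U.card * W.card : ℕ) : ℝ) * q) then (1:ℝ) else 0)
              * (q ^ k * (1 - q) ^ (E₀.card - k)))
      = ∑ k ∈ (Finset.range (E₀.card+1)).filter
          (fun k : ℕ => (k:ℝ) ≤ (1-ρ) * (((U.card * W.card : ℕ):ℝ) * q)),
          (E₀.card.choose k : ℝ) * (q ^ k * (1-q) ^ (E₀.card-k)) := by
        rw [Finset.sum_filter]
        refine Finset.sum_congr rfl fun k _ => ?_
        by_cases h : (k:ℝ) ≤ (1-ρ) * (((U.card * W.card : ℕ):ℝ) * q) <;> simp [h]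
    _ ≤ Real.exp (-(ρ^2/4) * (((U.card * W.card : ℕ) : ℝ) * q)) := by
        have h2 := chernoff_low E₀.card q ρ hq0 hq1 hρ0 hρ1
        have hm : ((E₀.card : ℝ)) = ((U.card * W.card : ℕ) : ℝ) := by rw [hcard]
        rw [hm] at h2
        convert h2 using 3

lemma gnpProb_nonneg {n : ℕ} {q : ℝ} (hq0 : 0 ≤ q) (hq1 : q ≤ 1)
    (A : Set (SimpleGraph (Fin n))) : 0 ≤ RandomTriangle.gnpProb n q A := by
  rw [gnpProb_eq]
  refine Finset.sum_nonneg fun S _ => ?_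
  exact mul_nonneg (pow_nonneg hq0 _) (pow_nonneg (by linarith) _)

lemma gnpProb_mono {n : ℕ} {q : ℝ} (hq0 : 0 ≤ q) (hq1 : q ≤ 1)
    {A B : Set (SimpleGraph (Fin n))} (hAB : A ⊆ B) :
    RandomTriangle.gnpProb n q A ≤ RandomTriangle.gnpProb n q B := by
  rw [gnpProb_eq, gnpProb_eq]
  refine Finset.sum_le_sum_of_subset_of_nonneg ?_ ?_
  · intro S hS
    simp only [Finset.mem_filter] at *
    exact ⟨hS.1, hAB hS.2⟩
  · intro S _ _
    exact mul_nonneg (pow_nonneg hq0 _) (pow_nonneg (by linarith) _)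

lemma gnpProb_union_le {n : ℕ} {q : ℝ} (hq0 : 0 ≤ q) (hq1 : q ≤ 1)
    (A B : Set (SimpleGraph (Fin n))) :
    RandomTriangle.gnpProb n q (A ∪ B)
      ≤ RandomTriangle.gnpProb n q A + RandomTriangle.gnpProb n q B := by
  rw [gnpProb_eq, gnpProb_eq, gnpProb_eq]
  set sA := (allE n).powerset.filter
    (fun S : Finset (Sym2 (Fin n)) => SimpleGraph.fromEdgeSet ↑S ∈ A) with hsA
  set sB := (allE n).powerset.filter
    (fun S : Finset (Sym2 (Fin n)) => SimpleGraph.fromEdgeSet ↑S ∈ B) with hsB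
  have hwt : ∀ S : Finset (Sym2 (Fin n)), 0 ≤ wt n q S := fun S =>
    mul_nonneg (pow_nonneg hq0 _) (pow_nonneg (by linarith) _)
  refine le_trans (Finset.sum_le_sum_of_subset_of_nonneg (t := sA ∪ sB) ?_ fun S _ _ => hwt S) ?_
  · intro S hS
    simp only [Finset.mem_filter, Set.mem_union, hsA, hsB, Finset.mem_union] at *
    tauto
  · have h1 := Finset.sum_union_inter (s₁ := sA) (s₂ := sB) (f := wt n q)
    have h2 : 0 ≤ ∑ S ∈ sA ∩ sB, wt n q S := Finset.sum_nonneg fun S _ => hwt S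
    linarith

lemma gnpProb_biUnion_le {n : ℕ} {q : ℝ} (hq0 : 0 ≤ q) (hq1 : q ≤ 1)
    {ι : Type*} (s : Finset ι) (A : ι → Set (SimpleGraph (Fin n))) :
    RandomTriangle.gnpProb n q {G | ∃ i ∈ s, G ∈ A i}
      ≤ ∑ i ∈ s, RandomTriangle.gnpProb n q (A i) := by
  induction s using Finset.induction_on with
  | empty =>
    simp only [Finset.notMem_empty, false_and, exists_false, Finset.sum_empty]
    rw [gnpProb_eq]
    simp
  | @insert a s' ha ih =>
    have hset : {G : SimpleGraph (Fin n) | ∃ i ∈ insert a s', G ∈ A i}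
        = A a ∪ {G | ∃ i ∈ s', G ∈ A i} := by
      ext G
      simp only [Set.mem_setOf_eq, Finset.mem_insert, Set.mem_union]
      constructor
      · rintro ⟨i, (rfl | hi), hG⟩
        · exact Or.inl hG
        · exact Or.inr ⟨i, hi, hG⟩
      · rintro (hG | ⟨i, hi, hG⟩)
        · exact ⟨a, Or.inl rfl, hG⟩
        · exact ⟨i, Or.inr hi, hG⟩
    rw [hset, Finset.sum_insert ha]
    exact (gnpProb_union_le hq0 hq1 _ _).trans (by linarith [ih])

lemma sum_wt_allE {n : ℕ} {q : ℝ} : ∑ S ∈ (allE n).powerset, wt n q S = 1 := by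
  have := sum_wt_one (allE n) q
  rw [card_allE] at this
  exact this

lemma gnpProb_univ {n : ℕ} {q : ℝ} : RandomTriangle.gnpProb n q Set.univ = 1 := by
  rw [gnpProb_eq]
  refine Eq.trans (Finset.sum_congr ?_ fun _ _ => rfl) sum_wt_allE
  ext S
  simp

lemma gnpProb_compl {n : ℕ} {q : ℝ} (A : Set (SimpleGraph (Fin n))) :
    RandomTriangle.gnpProb n q A + RandomTriangle.gnpProb n q {G | G ∉ A} = 1 := by
  rw [gnpProb_eq, gnpProb_eq]
  have key := Finset.sum_filter_add_sum_filter_not (allE n).powerset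
    (fun S : Finset (Sym2 (Fin n)) => SimpleGraph.fromEdgeSet ↑S ∈ A) (wt n q)
  rw [sum_wt_allE] at key
  refine Eq.trans ?_ key
  congr 1 <;>
  · refine Finset.sum_congr ?_ fun _ _ => rfl
    ext S
    simp

lemma bot_degIn {n : ℕ} (v : Fin n) (W : Finset (Fin n)) :
    RandomTriangle.degIn (⊥ : SimpleGraph (Fin n)) v W = 0 := by
  simp [RandomTriangle.degIn]

/-- The good property. -/
def Good (ρ ξ D : ℝ) (n : ℕ) (q : ℝ) (G : SimpleGraph (Fin n)) : Prop :=
  ∀ W : Finset (Fin n), ξ * n ≤ (W.card : ℝ) →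
    ((((Finset.univ : Finset (Fin n)) \ W).filter fun v =>
        ¬ ((1 - ρ) * W.card * q ≤ (RandomTriangle.degIn G v W : ℝ) ∧
           (RandomTriangle.degIn G v W : ℝ) ≤ (1 + ρ) * W.card * q)).card : ℝ) ≤ D / q

def EvH (ρ q : ℝ) {n : ℕ} (UW : Finset (Fin n) × Finset (Fin n)) :
    Set (SimpleGraph (Fin n)) :=
  {G | (1+ρ) * (((UW.1.card * UW.2.card : ℕ) : ℝ) * q)
    ≤ ((∑ v ∈ UW.1, RandomTriangle.degIn G v UW.2 : ℕ) : ℝ)}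

def EvL (ρ q : ℝ) {n : ℕ} (UW : Finset (Fin n) × Finset (Fin n)) :
    Set (SimpleGraph (Fin n)) :=
  {G | ((∑ v ∈ UW.1, RandomTriangle.degIn G v UW.2 : ℕ) : ℝ)
    ≤ (1-ρ) * (((UW.1.card * UW.2.card : ℕ) : ℝ) * q)}

lemma main_bound (ρ ξ : ℝ) (hρ0 : 0 < ρ) (hρ1 : ρ < 1/2) (hξ : 0 < ξ)
    (n : ℕ) (q : ℝ) (hq0 : 0 ≤ q) (hq1 : q ≤ 1) :
    1 - 2 * ((4:ℝ) * Real.exp (-3))^n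
      ≤ RandomTriangle.gnpProb n q {G | Good ρ ξ (24 / (ρ^2 * ξ) + 1) n q G} := by
  set D : ℝ := 24 / (ρ^2 * ξ) + 1 with hD
  have hD0 : 0 < D := by rw [hD]; positivity
  have hDξ : 24 ≤ ρ^2 * ξ * D := by
    rw [hD]
    have h : ρ^2 * ξ * (24 / (ρ^2 * ξ)) = 24 := by
      field_simp
    nlinarith [sq_nonneg ρ, mul_pos (mul_pos (mul_pos hρ0 hρ0) hξ) hD0]
  have hb0 : 0 ≤ 2 * ((4:ℝ) * Real.exp (-3))^n := by positivity
  clear_value D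
  -- trivial upper bound helper
  rcases eq_or_lt_of_le hq0 with hq | hq
  · -- q = 0 : the empty graph is good, bad graphs have probability 0
    have hbad : RandomTriangle.gnpProb n q {G | ¬ Good ρ ξ D n q G} = 0 := by
      rw [gnpProb_eq]
      apply Finset.sum_eq_zero
      intro S hS
      simp only [Finset.mem_filter, Finset.mem_powerset, Set.mem_setOf_eq] at hS
      have hSne : S.Nonempty := by
        by_contra h
        rw [Finset.not_nonempty_iff_eq_empty] at h
        subst h
        apply hS.2
        intro W hW
        have hbot : SimpleGraph.fromEdgeSet ((↑(∅ : Finset (Sym2 (Fin n)))) : Set (Sym2 (Fin n)))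
            = (⊥ : SimpleGraph (Fin n)) := by
          simp
        rw [hbot]
        have : ((Finset.univ : Finset (Fin n)) \ W).filter (fun v =>
            ¬ ((1 - ρ) * W.card * q ≤ (RandomTriangle.degIn (⊥ : SimpleGraph (Fin n)) v W : ℝ) ∧
              (RandomTriangle.degIn (⊥ : SimpleGraph (Fin n)) v W : ℝ) ≤ (1 + ρ) * W.card * q))
            = ∅ := by
          apply Finset.filter_false_of_mem
          intro v _
          rw [bot_degIn]
          push_neg
          rw [← hq]
          simp
        rw [this]
        simp [div_nonneg hD0.le hq0]
      rw [wt, ← hq]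
      rw [zero_pow (by simpa using hSne.card_ne_zero)]
      ring
    have := gnpProb_compl (n := n) (q := q) {G | Good ρ ξ D n q G}
    have h2 : RandomTriangle.gnpProb n q {G | G ∉ {G | Good ρ ξ D n q G}}
        = RandomTriangle.gnpProb n q {G | ¬ Good ρ ξ D n q G} := rfl
    rw [h2, hbad] at this
    linarith
  · -- q > 0
    by_cases hnq : (n:ℝ) * q ≤ D / 2
    · -- deterministic case : everything is good
      have hgood : ∀ G : SimpleGraph (Fin n), Good ρ ξ D n q G := by
        intro G W hW
        have hcard : (((Finset.univ : Finset (Fin n)) \ W).filter fun v =>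
            ¬ ((1 - ρ) * W.card * q ≤ (RandomTriangle.degIn G v W : ℝ) ∧
              (RandomTriangle.degIn G v W : ℝ) ≤ (1 + ρ) * W.card * q)).card ≤ n := by
          calc _ ≤ ((Finset.univ : Finset (Fin n)) \ W).card :=
                Finset.card_le_card (Finset.filter_subset _ _)
            _ ≤ (Finset.univ : Finset (Fin n)).card := Finset.card_le_card (Finset.sdiff_subset)
            _ = n := by simp
        have h1 : ((((Finset.univ : Finset (Fin n)) \ W).filter fun v =>
            ¬ ((1 - ρ) * W.card * q ≤ (RandomTriangle.degIn G v W : ℝ) ∧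
              (RandomTriangle.degIn G v W : ℝ) ≤ (1 + ρ) * W.card * q)).card : ℝ) ≤ n := by
          exact_mod_cast hcard
        have h2 : (n:ℝ) ≤ D / q := by
          rw [le_div_iff₀ hq]
          have hDD : D / 2 ≤ D := by linarith
          exact hnq.trans hDD
        linarith
      have huniv : (Set.univ : Set (SimpleGraph (Fin n))) ⊆ {G | Good ρ ξ D n q G} := by
        intro G _; exact hgood G
      have := gnpProb_mono hq0 hq1 huniv
      rw [gnpProb_univ] at this
      linarith
    · -- Chernoff case
      push_neg at hnq
      set m₀ : ℕ := ⌊D / (2*q)⌋₊ + 1 with hm₀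
      have hm₀q : D / 2 ≤ (m₀ : ℝ) * q := by
        have h1 : D / (2*q) < (m₀ : ℝ) := by
          rw [hm₀]
          push_cast
          exact Nat.lt_floor_add_one _
        have h2 : D / (2*q) * q = D / 2 := by field_simp
        nlinarith
      set index : Finset (Finset (Fin n) × Finset (Fin n)) :=
        ((Finset.univ : Finset (Fin n)).powerset ×ˢ (Finset.univ : Finset (Fin n)).powerset).filter
          (fun UW => Disjoint UW.1 UW.2 ∧ ξ * n ≤ (UW.2.card : ℝ) ∧ D / 2 ≤ (UW.1.card : ℝ) * q)
        with hindex
      -- step A : bad ⊆ union of events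
      have stepA : {G : SimpleGraph (Fin n) | ¬ Good ρ ξ D n q G}
          ⊆ {G | ∃ i ∈ index, G ∈ EvH ρ q i ∪ EvL ρ q i} := by
        intro G hG
        rw [Set.mem_setOf_eq] at hG
        unfold Good at hG
        rw [not_forall] at hG
        obtain ⟨W, hG2⟩ := hG
        rw [Classical.not_imp] at hG2
        obtain ⟨hWn, hbad⟩ := hG2
        rw [not_le] at hbad
        set badL := ((Finset.univ : Finset (Fin n)) \ W).filter
          (fun v => ¬ ((1 - ρ) * W.card * q ≤ (RandomTriangle.degIn G v W : ℝ))) with hbadL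
        set badH := ((Finset.univ : Finset (Fin n)) \ W).filter
          (fun v => ¬ ((RandomTriangle.degIn G v W : ℝ) ≤ (1 + ρ) * W.card * q)) with hbadH
        have hsub : (((Finset.univ : Finset (Fin n)) \ W).filter fun v =>
            ¬ ((1 - ρ) * W.card * q ≤ (RandomTriangle.degIn G v W : ℝ) ∧
              (RandomTriangle.degIn G v W : ℝ) ≤ (1 + ρ) * W.card * q)) ⊆ badL ∪ badH := by
          intro v hv
          simp only [Finset.mem_filter, Finset.mem_union, hbadL, hbadH, not_and_or] at *
          tauto
        have hcards := Finset.card_le_card hsub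
        have hcardu := Finset.card_union_le badL badH
        have hside : m₀ ≤ badL.card ∨ m₀ ≤ badH.card := by
          by_contra h
          push_neg at h
          have h1 : badL.card ≤ ⌊D / (2*q)⌋₊ := by omega
          have h2 : badH.card ≤ ⌊D / (2*q)⌋₊ := by omega
          have hfl : (⌊D / (2*q)⌋₊ : ℝ) ≤ D / (2*q) := Nat.floor_le (by positivity)
          have hDq : 2 * (D / (2*q)) = D / q := by field_simp
          have : ((((Finset.univ : Finset (Fin n)) \ W).filter fun v =>
              ¬ ((1 - ρ) * W.card * q ≤ (RandomTriangle.degIn G v W : ℝ) ∧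
                (RandomTriangle.degIn G v W : ℝ) ≤ (1 + ρ) * W.card * q)).card : ℝ)
              ≤ (badL.card : ℝ) + (badH.card : ℝ) := by
            have := hcards.trans hcardu
            exact_mod_cast this
          have hL : (badL.card : ℝ) ≤ D / (2*q) := le_trans (by exact_mod_cast h1) hfl
          have hH : (badH.card : ℝ) ≤ D / (2*q) := le_trans (by exact_mod_cast h2) hfl
          linarith
        rcases hside with hside | hside
        · -- low side
          obtain ⟨U, hUsub, hUcard⟩ := Finset.exists_subset_card_eq hside
          have hUW : Disjoint U W := by
            rw [Finset.disjoint_left]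
            intro v hv hvW
            have := hUsub hv
            rw [hbadL, Finset.mem_filter, Finset.mem_sdiff] at this
            exact this.1.2 hvW
          refine ⟨(U, W), ?_, ?_⟩
          · rw [hindex, Finset.mem_filter, Finset.mem_product]
            refine ⟨⟨Finset.mem_powerset.2 (Finset.subset_univ _),
              Finset.mem_powerset.2 (Finset.subset_univ _)⟩, hUW, hWn, ?_⟩
            rw [hUcard]
            exact hm₀q
          · apply Set.mem_union_right
            simp only [EvL, Set.mem_setOf_eq]
            have hsum : ∀ v ∈ U, (RandomTriangle.degIn G v W : ℝ) ≤ (1 - ρ) * W.card * q := by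
              intro v hv
              have := hUsub hv
              rw [hbadL, Finset.mem_filter] at this
              have := this.2
              push_neg at this
              linarith
            have h1 : ((∑ v ∈ U, RandomTriangle.degIn G v W : ℕ) : ℝ)
                ≤ ∑ v ∈ U, ((1 - ρ) * W.card * q) := by
              push_cast
              exact Finset.sum_le_sum hsum
            rw [Finset.sum_const, nsmul_eq_mul] at h1
            rw [hUcard] at h1 ⊢
            push_cast
            push_cast at h1
            nlinarith
        · -- high side
          obtain ⟨U, hUsub, hUcard⟩ := Finset.exists_subset_card_eq hside
          have hUW : Disjoint U W := by
            rw [Finset.disjoint_left]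
            intro v hv hvW
            have := hUsub hv
            rw [hbadH, Finset.mem_filter, Finset.mem_sdiff] at this
            exact this.1.2 hvW
          refine ⟨(U, W), ?_, ?_⟩
          · rw [hindex, Finset.mem_filter, Finset.mem_product]
            refine ⟨⟨Finset.mem_powerset.2 (Finset.subset_univ _),
              Finset.mem_powerset.2 (Finset.subset_univ _)⟩, hUW, hWn, ?_⟩
            rw [hUcard]
            exact hm₀q
          · apply Set.mem_union_left
            simp only [EvH, Set.mem_setOf_eq]
            have hsum : ∀ v ∈ U, (1 + ρ) * W.card * q ≤ (RandomTriangle.degIn G v W : ℝ) := by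
              intro v hv
              have := hUsub hv
              rw [hbadH, Finset.mem_filter] at this
              have := this.2
              push_neg at this
              linarith
            have h1 : ∑ v ∈ U, ((1 + ρ) * W.card * q)
                ≤ ((∑ v ∈ U, RandomTriangle.degIn G v W : ℕ) : ℝ) := by
              push_cast
              exact Finset.sum_le_sum hsum
            rw [Finset.sum_const, nsmul_eq_mul] at h1
            rw [hUcard] at h1 ⊢
            push_cast
            push_cast at h1
            nlinarith
      -- step B : probability of each event
      have stepB : ∀ i ∈ index, RandomTriangle.gnpProb n q (EvH ρ q i ∪ EvL ρ q i)
          ≤ 2 * Real.exp (-(3:ℝ) * n) := by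
        rintro ⟨U, W⟩ hi
        rw [hindex, Finset.mem_filter, Finset.mem_product] at hi
        obtain ⟨_, hUW, hWn, hUq⟩ := hi
        have hexp : Real.exp (-(ρ^2/4) * (((U.card * W.card : ℕ) : ℝ) * q))
            ≤ Real.exp (-(3:ℝ) * n) := by
          apply Real.exp_le_exp.2
          have hWq : (0:ℝ) ≤ (W.card : ℝ) := Nat.cast_nonneg _
          have h1 : D / 2 * (ξ * n) ≤ ((U.card : ℝ) * q) * (W.card : ℝ) := by
            apply mul_le_mul hUq hWn (by positivity) (by positivity)
          have h2 : ((U.card * W.card : ℕ) : ℝ) * q = ((U.card : ℝ) * q) * (W.card : ℝ) := by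
            push_cast; ring
          rw [h2]
          have hn0 : (0:ℝ) ≤ n := Nat.cast_nonneg _
          have t1 : (ρ^2/4) * (D/2 * (ξ * n)) ≤ (ρ^2/4) * (((U.card : ℝ) * q) * (W.card : ℝ)) :=
            mul_le_mul_of_nonneg_left h1 (by positivity)
          have t2 : 24 * (n:ℝ) ≤ (ρ^2 * ξ * D) * n :=
            mul_le_mul_of_nonneg_right hDξ hn0
          have t3 : (ρ^2/4) * (D/2 * (ξ * (n:ℝ))) = (ρ^2 * ξ * D) * n / 8 := by ring
          linarith [t1, t2, t3]
        calc RandomTriangle.gnpProb n q (EvH ρ q (U, W) ∪ EvL ρ q (U, W))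
            ≤ RandomTriangle.gnpProb n q (EvH ρ q (U, W)) + RandomTriangle.gnpProb n q (EvL ρ q (U, W)) :=
              gnpProb_union_le hq0 hq1 _ _
          _ ≤ Real.exp (-(ρ^2/4) * (((U.card * W.card : ℕ) : ℝ) * q))
              + Real.exp (-(ρ^2/4) * (((U.card * W.card : ℕ) : ℝ) * q)) := by
              have hh := prob_high hq0 hq1 hρ0 (by linarith : ρ ≤ 1) U W hUW
              have hl := prob_low hq0 hq1 hρ0 (by linarith : ρ ≤ 1) U W hUW
              exact add_le_add hh hl
          _ ≤ 2 * Real.exp (-(3:ℝ) * n) := by linarith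
      -- combine
      have hbad : RandomTriangle.gnpProb n q {G | ¬ Good ρ ξ D n q G}
          ≤ 2 * ((4:ℝ) * Real.exp (-3))^n := by
        calc RandomTriangle.gnpProb n q {G | ¬ Good ρ ξ D n q G}
            ≤ RandomTriangle.gnpProb n q {G | ∃ i ∈ index, G ∈ EvH ρ q i ∪ EvL ρ q i} :=
              gnpProb_mono hq0 hq1 stepA
          _ ≤ ∑ i ∈ index, RandomTriangle.gnpProb n q (EvH ρ q i ∪ EvL ρ q i) :=
              gnpProb_biUnion_le hq0 hq1 index _
          _ ≤ ∑ _i ∈ index, 2 * Real.exp (-(3:ℝ) * n) := Finset.sum_le_sum stepB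
          _ = index.card * (2 * Real.exp (-(3:ℝ) * n)) := by
              rw [Finset.sum_const, nsmul_eq_mul]
          _ ≤ ((4:ℝ)^n) * (2 * Real.exp (-(3:ℝ) * n)) := by
              have hcard : index.card ≤ 4^n := by
                calc index.card ≤ (((Finset.univ : Finset (Fin n)).powerset
                      ×ˢ (Finset.univ : Finset (Fin n)).powerset)).card :=
                    Finset.card_filter_le _ _
                  _ = 2^n * 2^n := by
                    rw [Finset.card_product, Finset.card_powerset, Finset.card_univ,
                      Fintype.card_fin]
                  _ = 4^n := by rw [← mul_pow]; norm_num
              have : (index.card : ℝ) ≤ (4:ℝ)^n := by exact_mod_cast hcard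
              have hpos : (0:ℝ) ≤ 2 * Real.exp (-(3:ℝ) * n) := by positivity
              nlinarith
          _ = 2 * ((4:ℝ) * Real.exp (-3))^n := by
              rw [mul_pow]
              have : Real.exp (-(3:ℝ) * n) = (Real.exp (-3))^n := by
                rw [← Real.exp_nat_mul]
                ring_nf
              rw [this]
              ring
      have hcompl := gnpProb_compl (n := n) (q := q) {G | Good ρ ξ D n q G}
      have h2 : RandomTriangle.gnpProb n q {G | G ∉ {G | Good ρ ξ D n q G}}
          = RandomTriangle.gnpProb n q {G | ¬ Good ρ ξ D n q G} := rfl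
      rw [h2] at hcompl
      linarith

end StmtAux


/-- **Proposition (degrees into large sets).** For every `ρ ∈ (0,1/2)` and `ξ > 0` there is
`D` such that a.a.s. for every `W` with `|W| ≥ ξn`, all but at most `D·p⁻¹` vertices outside
`W` have `(1 ± ρ)|W|p` neighbours in `W`. -/
theorem stmt_10 (ρ ξ : ℝ) (hρ0 : 0 < ρ) (hρ1 : ρ < 1 / 2) (hξ : 0 < ξ) :
    ∃ D : ℝ, 0 < D ∧
      ∀ p : ℕ → ℝ, (∀ n, 0 ≤ p n) → (∀ n, p n ≤ 1) →
        AAS p (fun n G =>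
          ∀ W : Finset (Fin n), ξ * n ≤ (W.card : ℝ) →
            ((((Finset.univ : Finset (Fin n)) \ W).filter fun v =>
                ¬ ((1 - ρ) * W.card * p n ≤ (degIn G v W : ℝ) ∧
                   (degIn G v W : ℝ) ≤ (1 + ρ) * W.card * p n)).card : ℝ) ≤ D / p n) := by
  refine ⟨24 / (ρ^2 * ξ) + 1, by positivity, ?_⟩
  intro p hp0 hp1
  unfold RandomTriangle.AAS
  have h4 : (4:ℝ) * Real.exp (-3) < 1 := by
    have h := Real.add_one_lt_exp (by norm_num : (3:ℝ) ≠ 0)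
    rw [Real.exp_neg, ← div_eq_mul_inv]
    exact (div_lt_one (Real.exp_pos 3)).2 (by linarith)
  have h0 : (0:ℝ) ≤ 4 * Real.exp (-3) := by positivity
  have hb : Filter.Tendsto (fun n : ℕ => 1 - 2 * ((4:ℝ) * Real.exp (-3))^n)
      Filter.atTop (nhds 1) := by
    have h1 := tendsto_pow_atTop_nhds_zero_of_lt_one h0 h4
    have h2 := h1.const_mul (2:ℝ)
    have h3 := (tendsto_const_nhds (α := ℕ) (f := Filter.atTop) (x := (1:ℝ))).sub h2
    simpa using h3
  refine tendsto_of_tendsto_of_tendsto_of_le_of_le hb tendsto_const_nhds ?_ ?_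
  · intro n
    exact StmtAux.main_bound ρ ξ hρ0 hρ1 hξ n (p n) (hp0 n) (hp1 n)
  · intro n
    have := StmtAux.gnpProb_mono (hp0 n) (hp1 n)
      (Set.subset_univ ({G : SimpleGraph (Fin n) | ∀ W : Finset (Fin n), ξ * n ≤ (W.card : ℝ) →
        ((((Finset.univ : Finset (Fin n)) \ W).filter fun v =>
            ¬ ((1 - ρ) * W.card * p n ≤ (degIn G v W : ℝ) ∧
               (degIn G v W : ℝ) ≤ (1 + ρ) * W.card * p n)).card : ℝ) ≤ (24 / (ρ^2 * ξ) + 1) / p n}))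
    rw [StmtAux.gnpProb_univ] at this
    exact this
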